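/- Every strongly connected digraph D on n ≥ 2 vertices that contains a directed Hamiltonian cycle admits an edge temporalisation whose temporal reachability (number of ordered pairs (u,v) with v temporally reachable from u) is at least (⌊n/2⌋ + 1)·(⌈n/2⌉ + 1) ≥ n²/4. -/

import Mathlib

/-- A temporal path in a digraph with edge relation `E` and temporalisation `τ`:
a nonempty list of edges of `E`, consecutive (head = next tail), from `u` to `v`,
with strictly increasing times. -/
def IsTemporalPath {V : Type*} (E : V → V → Prop) (τ : V × V → ℕ)
    (u v : V) (p : List (V × V)) : Prop :=
  (∀ e ∈ p, E e.1 e.2) ∧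
  (∃ e ∈ p.head?, e.1 = u) ∧
  (∃ e ∈ p.getLast?, e.2 = v) ∧
  p.Chain' (fun e f => e.2 = f.1) ∧
  p.Chain' (fun e f => τ e < τ f)

/-- `v` is temporally reachable from `u`. -/
def TReach {V : Type*} (E : V → V → Prop) (τ : V × V → ℕ) (u v : V) : Prop :=
  u = v ∨ ∃ p, IsTemporalPath E τ u v p

lemma chain'_range'_aux {R : ℕ → ℕ → Prop} (a k : ℕ)
    (h : ∀ i, a ≤ i → i + 1 < a + k → R i (i + 1)) :
    (List.range' a k).Chain' R := by
  induction k generalizing a with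
  | zero => exact List.isChain_nil
  | succ k ih =>
    rw [List.range'_succ]
    cases k with
    | zero => exact List.isChain_singleton _
    | succ k =>
      rw [List.range'_succ, List.Chain', List.isChain_cons_cons]
      refine ⟨h a le_rfl (by omega), ?_⟩
      rw [← List.range'_succ]
      exact ih (a + 1) (fun i hi hlt => h i (by omega) (by omega))

lemma temporal_path_aux {V : Type*} {E : V → V → Prop} {n : ℕ} (hn : 0 < n)
    (σ : Fin n ≃ V)
    (hham : ∀ i : Fin n, E (σ i) (σ ⟨((i : ℕ) + 1) % n, Nat.mod_lt _ hn⟩))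
    (a m : ℕ) (ham : a < m) (hm : m ≤ n) :
    TReach E (fun e => (σ.symm e.1 : ℕ))
      (σ ⟨a, lt_of_lt_of_le ham hm⟩) (σ ⟨m % n, Nat.mod_lt _ hn⟩) := by
  set g : ℕ → V × V := fun i =>
    (σ ⟨i % n, Nat.mod_lt _ hn⟩, σ ⟨(i + 1) % n, Nat.mod_lt _ hn⟩) with hg
  refine Or.inr ⟨(List.range' a (m - a)).map g, ?_, ?_, ?_, ?_, ?_⟩
  · intro e he
    obtain ⟨i, hi, rfl⟩ := List.mem_map.1 he
    rw [List.mem_range'_1] at hi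
    have hilt : i < n := by omega
    have := hham ⟨i % n, Nat.mod_lt _ hn⟩
    simpa [hg, Nat.mod_eq_of_lt hilt] using this
  · obtain ⟨k, hk⟩ : ∃ k, m - a = k + 1 := ⟨m - a - 1, by omega⟩
    rw [hk, List.range'_succ]
    exact ⟨g a, rfl, by simp [hg, Nat.mod_eq_of_lt (by omega : a < n)]⟩
  · obtain ⟨k, hk⟩ : ∃ k, m - a = k + 1 := ⟨m - a - 1, by omega⟩
    rw [hk, List.range'_concat, List.map_append]
    refine ⟨g (a + k), by simp, ?_⟩
    have : a + k + 1 = m := by omega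
    simp [hg, this]
  · rw [List.Chain', List.isChain_map]
    refine chain'_range'_aux a (m - a) (fun i hi hlt => ?_)
    simp [hg]
  · rw [List.Chain', List.isChain_map]
    refine chain'_range'_aux a (m - a) (fun i hi hlt => ?_)
    have h1 : i < n := by omega
    have h2 : i + 1 < n := by omega
    simp [hg, Nat.mod_eq_of_lt h1, Nat.mod_eq_of_lt h2]

theorem stmt13 {V : Type*} [Fintype V] (E : V → V → Prop) (n : ℕ)
    (hcard : Fintype.card V = n) (hn : 2 ≤ n)
    (hsc : ∀ u v : V, Relation.ReflTransGen E u v)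
    (σ : Fin n ≃ V)
    (hham : ∀ i : Fin n, E (σ i) (σ ⟨((i : ℕ) + 1) % n, Nat.mod_lt _ (by omega)⟩)) :
    ∃ τ : V × V → ℕ,
      (n / 2 + 1) * ((n + 1) / 2 + 1) ≤ {p : V × V | TReach E τ p.1 p.2}.ncard ∧
      n ^ 2 / 4 ≤ (n / 2 + 1) * ((n + 1) / 2 + 1) := by
  classical
  have hn0 : 0 < n := by omega
  set r : ℕ := n / 2 with hr
  have hrn : r < n := by omega
  set τ : V × V → ℕ := fun e => (σ.symm e.1 : ℕ) with hτ
  refine ⟨τ, ?_, ?_⟩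
  · set f : Fin (r + 1) × Fin (n - r + 1) → V × V := fun x =>
      (σ ⟨x.1, by omega⟩, σ ⟨(r + x.2) % n, Nat.mod_lt _ hn0⟩) with hf
    have hmod : ∀ j : ℕ, j ≤ n - r → (r + j) % n = if r + j = n then 0 else r + j := by
      intro j hj
      split
      · rename_i h; rw [h, Nat.mod_self]
      · exact Nat.mod_eq_of_lt (by omega)
    have hinj : Function.Injective f := by
      intro ⟨a, j⟩ ⟨a', j'⟩ hEq
      simp only [hf, Prod.mk.injEq, EmbeddingLike.apply_eq_iff_eq, Fin.mk.injEq] at hEq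
      have h1 := hmod j (by omega)
      have h2 := hmod j' (by omega)
      have ha : (a : ℕ) = a' := hEq.1
      have hj : (j : ℕ) = j' := by
        rw [h1, h2] at hEq
        rcases hEq with ⟨-, h⟩
        split at h <;> split at h <;> omega
      exact Prod.ext (Fin.ext ha) (Fin.ext hj)
    have hsub : ↑(Finset.image f Finset.univ) ⊆ {p : V × V | TReach E τ p.1 p.2} := by
      intro p hp
      simp only [Finset.coe_image, Finset.coe_univ, Set.image_univ, Set.mem_range] at hp
      obtain ⟨⟨a, j⟩, rfl⟩ := hp
      simp only [hf, Set.mem_setOf_eq]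
      by_cases hcase : (a : ℕ) = r ∧ (j : ℕ) = 0
      · left
        have : (r + (j : ℕ)) % n = (a : ℕ) := by
          rw [hcase.2, hcase.1, Nat.add_zero]
          exact Nat.mod_eq_of_lt (by omega)
        congr 1
        exact Fin.ext this.symm
      · have ham : (a : ℕ) < r + j := by
          have := a.isLt; have := j.isLt; omega
        exact temporal_path_aux hn0 σ hham a (r + j) ham (by have := j.isLt; omega)
    calc (n / 2 + 1) * ((n + 1) / 2 + 1)
        = (r + 1) * (n - r + 1) := by rw [hr]; congr 1; omega
      _ = (Finset.image f Finset.univ).card := by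
          rw [Finset.card_image_of_injective _ hinj]
          simp [Fintype.card_prod]
      _ = (↑(Finset.image f Finset.univ) : Set (V × V)).ncard := by
          rw [Set.ncard_coe_finset]
      _ ≤ _ := Set.ncard_le_ncard hsub (Set.toFinite _)
  · have : n ^ 2 / 4 = n / 2 * ((n + 1) / 2) := by
      rcases Nat.even_or_odd n with ⟨k, hk⟩ | ⟨k, hk⟩
      · subst hk
        have h4 : (k + k) ^ 2 = 4 * (k * k) := by ring
        have h2 : k + k = 2 * k := by ring
        rw [h4, Nat.mul_div_cancel_left _ (by norm_num), h2]
        rw [Nat.mul_div_cancel_left _ (by norm_num)]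
        congr 1
        omega
      · subst hk
        have h4 : (2 * k + 1) ^ 2 = 4 * (k * k + k) + 1 := by ring
        rw [h4]
        have : (4 * (k * k + k) + 1) / 4 = k * k + k := by omega
        rw [this]
        have h1 : (2 * k + 1) / 2 = k := by omega
        have h2 : (2 * k + 1 + 1) / 2 = k + 1 := by omega
        rw [h1, h2]; ring
    rw [this]
    exact Nat.mul_le_mul (by omega) (by omega)
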